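/- Let G be a finite-dimensional Hopf algebra, ▷ : Ĝ ⊗ A → A a left Hopf module action on an algebra A, and ◁ : B ⊗ Ĝ → B a right Hopf module action on an algebra B. Then the vector space A ⊗ Ĝ ⊗ B equipped with the product (A ⋊ φ ⋉ B)(A' ⋊ ψ ⋉ B') := A(φ₍₁₎ ▷ A') ⋊ φ₍₂₎ψ₍₁₎ ⋉ (B ◁ ψ₍₂₎)B' is an associative unital algebra with unit 1_A ⋊ 1̂ ⋉ 1_B. -/

import Mathlib

set_option maxHeartbeats 4000000
set_option synthInstance.maxHeartbeats 400000

open TensorProduct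

section Statement6Aux

open Coalgebra

variable {H V : Type*} [Ring H] [HopfAlgebra ℂ H]
  [AddCommGroup V] [Module ℂ V]

private lemma st6_repr_sum_apply {ι : Type*} {h : H} (r : Coalgebra.Repr ℂ h ι) (L : H ⊗[ℂ] H →ₗ[ℂ] V)
    (f : H → H → V) (hf : ∀ u v, f u v = L (u ⊗ₜ[ℂ] v)) :
    ∑ i ∈ r.index, f (r.left i) (r.right i) = L (Coalgebra.comul (R := ℂ) h) := by
  simp_rw [hf]
  rw [← map_sum, r.eq]

private lemma st6_repr_mul {ι₁ ι₂ ι₃ : Type*} {x y : H} (r : Coalgebra.Repr ℂ (x * y) ι₁) (rx : Coalgebra.Repr ℂ x ι₂)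
    (ry : Coalgebra.Repr ℂ y ι₃) (L : H ⊗[ℂ] H →ₗ[ℂ] V)
    (f : H → H → V) (hf : ∀ u v, f u v = L (u ⊗ₜ[ℂ] v)) :
    ∑ i ∈ r.index, f (r.left i) (r.right i)
      = ∑ m ∈ rx.index, ∑ n ∈ ry.index,
          f (rx.left m * ry.left n) (rx.right m * ry.right n) := by
  rw [st6_repr_sum_apply r L f hf, Bialgebra.comul_mul, ← rx.eq, ← ry.eq, Finset.sum_mul_sum]
  simp_rw [Algebra.TensorProduct.tmul_mul_tmul, map_sum, hf]

private lemma st6_repr_coassoc {ι κ Λ : Type*} {h : H} (r : Coalgebra.Repr ℂ h ι)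
    (rl : (i : ι) → Coalgebra.Repr ℂ (r.left i) κ)
    (rr : (i : ι) → Coalgebra.Repr ℂ (r.right i) Λ)
    (L : H ⊗[ℂ] (H ⊗[ℂ] H) →ₗ[ℂ] V)
    (f : H → H → H → V) (hf : ∀ x y z, f x y z = L (x ⊗ₜ[ℂ] (y ⊗ₜ[ℂ] z))) :
    ∑ i ∈ r.index, ∑ j ∈ (rl i).index,
        f ((rl i).left j) ((rl i).right j) (r.right i)
      = ∑ i ∈ r.index, ∑ j ∈ (rr i).index,
        f (r.left i) ((rr i).left j) ((rr i).right j) := by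
  have h1 := Coalgebra.sum_tmul_tmul_eq r rl rr
  have h2 := congrArg L h1
  simp only [map_sum] at h2
  simp_rw [hf]
  exact h2

private lemma st6_repr_counit_right {ι : Type*} {h : H} (r : Coalgebra.Repr ℂ h ι) (L : H →ₗ[ℂ] V)
    (f : H → V) (hf : ∀ x, f x = L x) :
    ∑ i ∈ r.index, Coalgebra.counit (R := ℂ) (r.right i) • f (r.left i) = f h := by
  have h1 := Coalgebra.sum_tmul_counit_eq (R := ℂ) r
  have h2 := congrArg (L ∘ₗ (TensorProduct.rid ℂ H).toLinearMap) h1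
  simp only [map_sum, LinearMap.coe_comp, Function.comp_apply,
    LinearEquiv.coe_coe, rid_tmul, map_smul, one_smul] at h2
  simp_rw [hf]
  exact h2

private lemma st6_repr_counit_left {ι : Type*} {h : H} (r : Coalgebra.Repr ℂ h ι) (L : H →ₗ[ℂ] V)
    (f : H → V) (hf : ∀ x, f x = L x) :
    ∑ i ∈ r.index, Coalgebra.counit (R := ℂ) (r.left i) • f (r.right i) = f h := by
  have h1 := Coalgebra.sum_counit_tmul_eq (R := ℂ) r
  have h2 := congrArg (L ∘ₗ (TensorProduct.lid ℂ H).toLinearMap) h1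
  simp only [map_sum, LinearMap.coe_comp, Function.comp_apply,
    LinearEquiv.coe_coe, lid_tmul, map_smul, one_smul] at h2
  simp_rw [hf]
  exact h2

/-- The canonical representation of `comul 1 = 1 ⊗ 1`. -/
private def st6_reprOne (H : Type*) [Ring H] [HopfAlgebra ℂ H] :
    Coalgebra.Repr ℂ (1 : H) Unit where
  index := {()}
  left := fun _ => 1
  right := fun _ => 1
  eq := by simp [Algebra.TensorProduct.one_def]

variable {A B : Type*} [Ring A] [Algebra ℂ A] [Ring B] [Algebra ℂ B]

private lemma st6_mul_rep
    (actA : H →ₗ[ℂ] A →ₗ[ℂ] A) (ractB : H →ₗ[ℂ] B →ₗ[ℂ] B)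
    (mul : A ⊗[ℂ] (H ⊗[ℂ] B) →ₗ[ℂ] A ⊗[ℂ] (H ⊗[ℂ] B) →ₗ[ℂ] A ⊗[ℂ] (H ⊗[ℂ] B))
    (hmul : ∀ (a a' : A) (b b' : B) (φ ψ : H),
      mul (a ⊗ₜ[ℂ] (φ ⊗ₜ[ℂ] b)) (a' ⊗ₜ[ℂ] (ψ ⊗ₜ[ℂ] b')) =
        TensorProduct.map (LinearMap.mulLeft ℂ a ∘ₗ actA.flip a')
          (TensorProduct.map (LinearMap.mul' ℂ H)
              (LinearMap.mulRight ℂ b' ∘ₗ ractB.flip b) ∘ₗ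
            (TensorProduct.assoc ℂ H H H).symm.toLinearMap)
          ((TensorProduct.assoc ℂ H H (H ⊗[ℂ] H))
            ((Coalgebra.comul (R := ℂ) φ) ⊗ₜ[ℂ] (Coalgebra.comul (R := ℂ) ψ))))
    (a a' : A) (b b' : B) (φ ψ : H) {ι₁ ι₂ : Type*} (rφ : Coalgebra.Repr ℂ φ ι₁) (rψ : Coalgebra.Repr ℂ ψ ι₂) :
    mul (a ⊗ₜ[ℂ] (φ ⊗ₜ[ℂ] b)) (a' ⊗ₜ[ℂ] (ψ ⊗ₜ[ℂ] b')) =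
      ∑ i ∈ rφ.index, ∑ j ∈ rψ.index,
        (a * actA (rφ.left i) a') ⊗ₜ[ℂ]
          ((rφ.right i * rψ.left j) ⊗ₜ[ℂ] (ractB (rψ.right j) b * b')) := by
  rw [hmul, ← rφ.eq, ← rψ.eq, sum_tmul]
  simp only [tmul_sum, map_sum, Finset.sum_apply, LinearMap.coe_sum]
  refine Finset.sum_congr rfl fun i _ => Finset.sum_congr rfl fun j _ => ?_
  simp [LinearMap.mul'_apply, mul_comm]


private lemma st6_sum_shuffle {M : Type*} [AddCommMonoid M]
    {ι₁ ι₂ ι₃ ι₄ ι₅ ι₆ : Type*}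
    (s : Finset ι₁) (si : ι₁ → Finset ι₂) (t : Finset ι₃) (tj : ι₃ → Finset ι₄)
    (u : Finset ι₅) (uk : ι₅ → Finset ι₆) (F : ι₁ → ι₂ → ι₃ → ι₄ → ι₅ → ι₆ → M) :
    ∑ j ∈ t, ∑ n ∈ tj j, ∑ k ∈ u, ∑ i ∈ s, ∑ l ∈ uk k, ∑ m ∈ si i, F i m j n k l
      = ∑ i ∈ s, ∑ m ∈ si i, ∑ j ∈ t, ∑ n ∈ tj j, ∑ k ∈ u, ∑ l ∈ uk k, F i m j n k l := by
  calc ∑ j ∈ t, ∑ n ∈ tj j, ∑ k ∈ u, ∑ i ∈ s, ∑ l ∈ uk k, ∑ m ∈ si i, F i m j n k l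
      = ∑ j ∈ t, ∑ n ∈ tj j, ∑ k ∈ u, ∑ i ∈ s, ∑ m ∈ si i, ∑ l ∈ uk k, F i m j n k l :=
        Finset.sum_congr rfl fun j _ => Finset.sum_congr rfl fun n _ =>
          Finset.sum_congr rfl fun k _ => Finset.sum_congr rfl fun i _ => Finset.sum_comm
    _ = ∑ j ∈ t, ∑ n ∈ tj j, ∑ i ∈ s, ∑ k ∈ u, ∑ m ∈ si i, ∑ l ∈ uk k, F i m j n k l :=
        Finset.sum_congr rfl fun j _ => Finset.sum_congr rfl fun n _ => Finset.sum_comm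
    _ = ∑ j ∈ t, ∑ n ∈ tj j, ∑ i ∈ s, ∑ m ∈ si i, ∑ k ∈ u, ∑ l ∈ uk k, F i m j n k l :=
        Finset.sum_congr rfl fun j _ => Finset.sum_congr rfl fun n _ =>
          Finset.sum_congr rfl fun i _ => Finset.sum_comm
    _ = ∑ j ∈ t, ∑ i ∈ s, ∑ n ∈ tj j, ∑ m ∈ si i, ∑ k ∈ u, ∑ l ∈ uk k, F i m j n k l :=
        Finset.sum_congr rfl fun j _ => Finset.sum_comm
    _ = ∑ j ∈ t, ∑ i ∈ s, ∑ m ∈ si i, ∑ n ∈ tj j, ∑ k ∈ u, ∑ l ∈ uk k, F i m j n k l :=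
        Finset.sum_congr rfl fun j _ => Finset.sum_congr rfl fun i _ => Finset.sum_comm
    _ = ∑ i ∈ s, ∑ j ∈ t, ∑ m ∈ si i, ∑ n ∈ tj j, ∑ k ∈ u, ∑ l ∈ uk k, F i m j n k l :=
        Finset.sum_comm
    _ = ∑ i ∈ s, ∑ m ∈ si i, ∑ j ∈ t, ∑ n ∈ tj j, ∑ k ∈ u, ∑ l ∈ uk k, F i m j n k l :=
        Finset.sum_congr rfl fun i _ => Finset.sum_comm

end Statement6Aux

/-- Let `G` be a finite-dimensional Hopf algebra with dual `Ĝ = H`, let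
`▷ = actA` be a left Hopf module action of `Ĝ` on an algebra `A` and `◁ = ractB` a right Hopf
module action of `Ĝ` on an algebra `B`.  Then `A ⊗ Ĝ ⊗ B` with the product
`(A ⋊ φ ⋉ B)(A' ⋊ ψ ⋉ B') = A(φ₁ ▷ A') ⋊ φ₂ψ₁ ⋉ (B ◁ ψ₂)B'` is an associative unital
algebra with unit `1_A ⋊ 1̂ ⋉ 1_B`. -/
theorem statement6
    (H A B : Type*) [Ring H] [HopfAlgebra ℂ H]
    [Ring A] [Algebra ℂ A] [Ring B] [Algebra ℂ B]
    [FiniteDimensional ℂ H]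
    -- left Hopf module action `▷` of `Ĝ = H` on `A`
    (actA : H →ₗ[ℂ] A →ₗ[ℂ] A)
    (hactA_mul : ∀ (φ ψ : H) (a : A), actA (φ * ψ) a = actA φ (actA ψ a))
    (hactA_one : ∀ a : A, actA 1 a = a)
    (hactA_alg : ∀ (φ : H) (a a' : A),
      actA φ (a * a') =
        LinearMap.mul' ℂ A
          (TensorProduct.map (actA.flip a) (actA.flip a') (Coalgebra.comul (R := ℂ) φ)))
    (hactA_unit : ∀ φ : H, actA φ (1 : A) = Coalgebra.counit (R := ℂ) φ • (1 : A))
    -- right Hopf module action `◁` of `Ĝ = H` on `B`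
    (ractB : H →ₗ[ℂ] B →ₗ[ℂ] B)
    (hractB_mul : ∀ (φ ψ : H) (b : B), ractB ψ (ractB φ b) = ractB (φ * ψ) b)
    (hractB_one : ∀ b : B, ractB 1 b = b)
    (hractB_alg : ∀ (φ : H) (b b' : B),
      ractB φ (b * b') =
        LinearMap.mul' ℂ B
          (TensorProduct.map (ractB.flip b) (ractB.flip b') (Coalgebra.comul (R := ℂ) φ)))
    (hractB_unit : ∀ φ : H, ractB φ (1 : B) = Coalgebra.counit (R := ℂ) φ • (1 : B))
    -- the two-sided crossed product structure on `A ⊗ Ĝ ⊗ B`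
    (mul : A ⊗[ℂ] (H ⊗[ℂ] B) →ₗ[ℂ] A ⊗[ℂ] (H ⊗[ℂ] B) →ₗ[ℂ] A ⊗[ℂ] (H ⊗[ℂ] B))
    (hmul : ∀ (a a' : A) (b b' : B) (φ ψ : H),
      mul (a ⊗ₜ[ℂ] (φ ⊗ₜ[ℂ] b)) (a' ⊗ₜ[ℂ] (ψ ⊗ₜ[ℂ] b')) =
        TensorProduct.map (LinearMap.mulLeft ℂ a ∘ₗ actA.flip a')
          (TensorProduct.map (LinearMap.mul' ℂ H)
              (LinearMap.mulRight ℂ b' ∘ₗ ractB.flip b) ∘ₗ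
            (TensorProduct.assoc ℂ H H H).symm.toLinearMap)
          ((TensorProduct.assoc ℂ H H (H ⊗[ℂ] H))
            ((Coalgebra.comul (R := ℂ) φ) ⊗ₜ[ℂ] (Coalgebra.comul (R := ℂ) ψ)))) :
    -- associativity
    (∀ x y z : A ⊗[ℂ] (H ⊗[ℂ] B), mul (mul x y) z = mul x (mul y z)) ∧
    -- unit `1_A ⋊ 1̂ ⋉ 1_B`
    (∀ x : A ⊗[ℂ] (H ⊗[ℂ] B), mul ((1 : A) ⊗ₜ[ℂ] ((1 : H) ⊗ₜ[ℂ] (1 : B))) x = x) ∧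
    (∀ x : A ⊗[ℂ] (H ⊗[ℂ] B), mul x ((1 : A) ⊗ₜ[ℂ] ((1 : H) ⊗ₜ[ℂ] (1 : B))) = x) := by
  -- the core computations on pure tensors
  have hassoc : ∀ (a a' a'' : A) (b b' b'' : B) (φ ψ χ : H),
      mul (mul (a ⊗ₜ[ℂ] (φ ⊗ₜ[ℂ] b)) (a' ⊗ₜ[ℂ] (ψ ⊗ₜ[ℂ] b'))) (a'' ⊗ₜ[ℂ] (χ ⊗ₜ[ℂ] b''))
        = mul (a ⊗ₜ[ℂ] (φ ⊗ₜ[ℂ] b)) (mul (a' ⊗ₜ[ℂ] (ψ ⊗ₜ[ℂ] b')) (a'' ⊗ₜ[ℂ] (χ ⊗ₜ[ℂ] b''))) := by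
    intro a a' a'' b b' b'' φ ψ χ
    let rφ := Coalgebra.Repr.arbitrary ℂ φ
    let rψ := Coalgebra.Repr.arbitrary ℂ ψ
    let rχ := Coalgebra.Repr.arbitrary ℂ χ
    let rφl : (i : rφ.ι) → Coalgebra.Repr ℂ (rφ.left i) (H × H) :=
      fun i => Coalgebra.Repr.arbitrary ℂ (rφ.left i)
    let rφr : (i : rφ.ι) → Coalgebra.Repr ℂ (rφ.right i) (H × H) :=
      fun i => Coalgebra.Repr.arbitrary ℂ (rφ.right i)
    let rψl : (j : rψ.ι) → Coalgebra.Repr ℂ (rψ.left j) (H × H) :=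
      fun j => Coalgebra.Repr.arbitrary ℂ (rψ.left j)
    let rψr : (j : rψ.ι) → Coalgebra.Repr ℂ (rψ.right j) (H × H) :=
      fun j => Coalgebra.Repr.arbitrary ℂ (rψ.right j)
    let rχl : (k : rχ.ι) → Coalgebra.Repr ℂ (rχ.left k) (H × H) :=
      fun k => Coalgebra.Repr.arbitrary ℂ (rχ.left k)
    let rχr : (k : rχ.ι) → Coalgebra.Repr ℂ (rχ.right k) (H × H) :=
      fun k => Coalgebra.Repr.arbitrary ℂ (rχ.right k)
    let rM : (i : rφ.ι) → (j : rψ.ι) → Coalgebra.Repr ℂ (rφ.right i * rψ.left j) (H × H) :=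
      fun i j => Coalgebra.Repr.arbitrary ℂ (rφ.right i * rψ.left j)
    let rN : (j : rψ.ι) → (k : rχ.ι) → Coalgebra.Repr ℂ (rψ.right j * rχ.left k) (H × H) :=
      fun j k => Coalgebra.Repr.arbitrary ℂ (rψ.right j * rχ.left k)
    have ract_exp : ∀ (h : H) (u v : B) (r : Coalgebra.Repr ℂ h (H × H)),
        ractB h (u * v) = ∑ l ∈ r.index, ractB (r.left l) u * ractB (r.right l) v := by
      intro h u v r
      rw [hractB_alg, ← r.eq]
      simp [map_sum, LinearMap.mul'_apply]
    have act_exp : ∀ (h : H) (u v : A) (r : Coalgebra.Repr ℂ h (H × H)),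
        actA h (u * v) = ∑ p ∈ r.index, actA (r.left p) u * actA (r.right p) v := by
      intro h u v r
      rw [hactA_alg, ← r.eq]
      simp [map_sum, LinearMap.mul'_apply]
    have hC : ∀ (j : rψ.ι) (k : rχ.ι),
        ractB (rχ.right k) (ractB (rψ.right j) b * b')
          = ∑ l ∈ (rχr k).index,
              ractB (rψ.right j * (rχr k).left l) b * ractB ((rχr k).right l) b' := by
      intro j k
      rw [ract_exp _ _ _ (rχr k)]
      simp_rw [hractB_mul]
    have hA : ∀ (i : rφ.ι) (j : rψ.ι),
        actA (rφ.left i) (a' * actA (rψ.left j) a'')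
          = ∑ p ∈ (rφl i).index,
              actA ((rφl i).left p) a' * actA ((rφl i).right p * rψ.left j) a'' := by
      intro i j
      rw [act_exp _ _ _ (rφl i)]
      simp_rw [← hactA_mul]
    have lhs_eq : mul (mul (a ⊗ₜ[ℂ] (φ ⊗ₜ[ℂ] b)) (a' ⊗ₜ[ℂ] (ψ ⊗ₜ[ℂ] b'))) (a'' ⊗ₜ[ℂ] (χ ⊗ₜ[ℂ] b''))
        = ∑ i ∈ rφ.index, ∑ m ∈ (rφl i).index, ∑ j ∈ rψ.index, ∑ n ∈ (rψl j).index,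
            ∑ k ∈ rχ.index, ∑ l ∈ (rχl k).index,
            (a * actA ((rφl i).left m) a' * actA ((rφl i).right m * (rψl j).left n) a'') ⊗ₜ[ℂ]
              ((rφ.right i * (rψl j).right n * (rχl k).left l) ⊗ₜ[ℂ]
                (ractB (rψ.right j * (rχl k).right l) b * ractB (rχ.right k) b' * b'')) := by
      calc mul (mul (a ⊗ₜ[ℂ] (φ ⊗ₜ[ℂ] b)) (a' ⊗ₜ[ℂ] (ψ ⊗ₜ[ℂ] b'))) (a'' ⊗ₜ[ℂ] (χ ⊗ₜ[ℂ] b''))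
          = ∑ i ∈ rφ.index, ∑ j ∈ rψ.index,
              mul ((a * actA (rφ.left i) a') ⊗ₜ[ℂ]
                ((rφ.right i * rψ.left j) ⊗ₜ[ℂ] (ractB (rψ.right j) b * b')))
                (a'' ⊗ₜ[ℂ] (χ ⊗ₜ[ℂ] b'')) := by
            rw [st6_mul_rep actA ractB mul hmul a a' b b' φ ψ rφ rψ]
            simp only [map_sum, LinearMap.sum_apply]
        _ = ∑ i ∈ rφ.index, ∑ j ∈ rψ.index, ∑ m ∈ (rM i j).index, ∑ k ∈ rχ.index,
              (a * actA (rφ.left i) a' * actA ((rM i j).left m) a'') ⊗ₜ[ℂ]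
                (((rM i j).right m * rχ.left k) ⊗ₜ[ℂ]
                  (ractB (rχ.right k) (ractB (rψ.right j) b * b') * b'')) :=
            Finset.sum_congr rfl fun i _ => Finset.sum_congr rfl fun j _ =>
              st6_mul_rep actA ractB mul hmul _ _ _ _ _ _ (rM i j) rχ
        _ = ∑ i ∈ rφ.index, ∑ j ∈ rψ.index, ∑ k ∈ rχ.index, ∑ m ∈ (rM i j).index,
              (a * actA (rφ.left i) a' * actA ((rM i j).left m) a'') ⊗ₜ[ℂ]
                (((rM i j).right m * rχ.left k) ⊗ₜ[ℂ]
                  (ractB (rχ.right k) (ractB (rψ.right j) b * b') * b'')) :=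
            Finset.sum_congr rfl fun i _ => Finset.sum_congr rfl fun j _ => Finset.sum_comm
        _ = ∑ i ∈ rφ.index, ∑ j ∈ rψ.index, ∑ k ∈ rχ.index,
              ∑ m ∈ (rφr i).index, ∑ n ∈ (rψl j).index,
              (a * actA (rφ.left i) a' *
                  actA ((rφr i).left m * (rψl j).left n) a'') ⊗ₜ[ℂ]
                (((rφr i).right m * (rψl j).right n * rχ.left k) ⊗ₜ[ℂ]
                  (ractB (rχ.right k) (ractB (rψ.right j) b * b') * b'')) :=
            Finset.sum_congr rfl fun i _ => Finset.sum_congr rfl fun j _ =>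
              Finset.sum_congr rfl fun k _ =>
              st6_repr_mul (rM i j) (rφr i) (rψl j)
                (TensorProduct.map
                  ((LinearMap.mulLeft ℂ (a * actA (rφ.left i) a')) ∘ₗ actA.flip a'')
                  (((TensorProduct.mk ℂ H B).flip
                      (ractB (rχ.right k) (ractB (rψ.right j) b * b') * b'')) ∘ₗ
                    LinearMap.mulRight ℂ (rχ.left k)))
                (fun u v => (a * actA (rφ.left i) a' * actA u a'') ⊗ₜ[ℂ]
                  ((v * rχ.left k) ⊗ₜ[ℂ]
                    (ractB (rχ.right k) (ractB (rψ.right j) b * b') * b'')))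
                (fun u v => rfl)
        _ = ∑ i ∈ rφ.index, ∑ j ∈ rψ.index, ∑ k ∈ rχ.index,
              ∑ m ∈ (rφr i).index, ∑ n ∈ (rψl j).index, ∑ l ∈ (rχr k).index,
              (a * actA (rφ.left i) a' *
                  actA ((rφr i).left m * (rψl j).left n) a'') ⊗ₜ[ℂ]
                (((rφr i).right m * (rψl j).right n * rχ.left k) ⊗ₜ[ℂ]
                  (ractB (rψ.right j * (rχr k).left l) b * ractB ((rχr k).right l) b' * b'')) := by
            simp only [hC, Finset.sum_mul, tmul_sum]
        _ = ∑ i ∈ rφ.index, ∑ j ∈ rψ.index, ∑ m ∈ (rφr i).index, ∑ k ∈ rχ.index,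
              ∑ n ∈ (rψl j).index, ∑ l ∈ (rχr k).index,
              (a * actA (rφ.left i) a' *
                  actA ((rφr i).left m * (rψl j).left n) a'') ⊗ₜ[ℂ]
                (((rφr i).right m * (rψl j).right n * rχ.left k) ⊗ₜ[ℂ]
                  (ractB (rψ.right j * (rχr k).left l) b * ractB ((rχr k).right l) b' * b'')) :=
            Finset.sum_congr rfl fun i _ => Finset.sum_congr rfl fun j _ => Finset.sum_comm
        _ = ∑ i ∈ rφ.index, ∑ m ∈ (rφr i).index, ∑ j ∈ rψ.index, ∑ k ∈ rχ.index,
              ∑ n ∈ (rψl j).index, ∑ l ∈ (rχr k).index,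
              (a * actA (rφ.left i) a' *
                  actA ((rφr i).left m * (rψl j).left n) a'') ⊗ₜ[ℂ]
                (((rφr i).right m * (rψl j).right n * rχ.left k) ⊗ₜ[ℂ]
                  (ractB (rψ.right j * (rχr k).left l) b * ractB ((rχr k).right l) b' * b'')) :=
            Finset.sum_congr rfl fun i _ => Finset.sum_comm
        _ = ∑ i ∈ rφ.index, ∑ m ∈ (rφl i).index, ∑ j ∈ rψ.index, ∑ k ∈ rχ.index,
              ∑ n ∈ (rψl j).index, ∑ l ∈ (rχr k).index,
              (a * actA ((rφl i).left m) a' *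
                  actA ((rφl i).right m * (rψl j).left n) a'') ⊗ₜ[ℂ]
                ((rφ.right i * (rψl j).right n * rχ.left k) ⊗ₜ[ℂ]
                  (ractB (rψ.right j * (rχr k).left l) b * ractB ((rχr k).right l) b' * b'')) :=
            (st6_repr_coassoc rφ rφl rφr
              (∑ j ∈ rψ.index, ∑ k ∈ rχ.index, ∑ n ∈ (rψl j).index, ∑ l ∈ (rχr k).index,
                (TensorProduct.map
                  (LinearMap.mul' ℂ A ∘ₗ TensorProduct.map
                    (LinearMap.mulLeft ℂ a ∘ₗ actA.flip a')
                    (actA.flip a'' ∘ₗ LinearMap.mulRight ℂ ((rψl j).left n)))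
                  (((TensorProduct.mk ℂ H B).flip
                      (ractB (rψ.right j * (rχr k).left l) b *
                        ractB ((rχr k).right l) b' * b'')) ∘ₗ
                    (LinearMap.mulRight ℂ (rχ.left k) ∘ₗ
                      LinearMap.mulRight ℂ ((rψl j).right n))) ∘ₗ
                  (TensorProduct.assoc ℂ H H H).symm.toLinearMap))
              (fun x y z => ∑ j ∈ rψ.index, ∑ k ∈ rχ.index,
                ∑ n ∈ (rψl j).index, ∑ l ∈ (rχr k).index,
                (a * actA x a' * actA (y * (rψl j).left n) a'') ⊗ₜ[ℂ]
                  ((z * (rψl j).right n * rχ.left k) ⊗ₜ[ℂ]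
                    (ractB (rψ.right j * (rχr k).left l) b *
                      ractB ((rχr k).right l) b' * b'')))
              (fun x y z => by
                simp only [LinearMap.sum_apply, LinearMap.coe_comp, Function.comp_apply,
                  LinearEquiv.coe_coe, assoc_symm_tmul, map_tmul, LinearMap.mul'_apply,
                  LinearMap.mulLeft_apply, LinearMap.mulRight_apply, LinearMap.flip_apply,
                  mk_apply])).symm
        _ = ∑ i ∈ rφ.index, ∑ m ∈ (rφl i).index, ∑ j ∈ rψ.index, ∑ n ∈ (rψl j).index,
              ∑ k ∈ rχ.index, ∑ l ∈ (rχr k).index,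
              (a * actA ((rφl i).left m) a' *
                  actA ((rφl i).right m * (rψl j).left n) a'') ⊗ₜ[ℂ]
                ((rφ.right i * (rψl j).right n * rχ.left k) ⊗ₜ[ℂ]
                  (ractB (rψ.right j * (rχr k).left l) b * ractB ((rχr k).right l) b' * b'')) :=
            Finset.sum_congr rfl fun i _ => Finset.sum_congr rfl fun m _ =>
              Finset.sum_congr rfl fun j _ => Finset.sum_comm
        _ = ∑ i ∈ rφ.index, ∑ m ∈ (rφl i).index, ∑ j ∈ rψ.index, ∑ n ∈ (rψl j).index,
              ∑ k ∈ rχ.index, ∑ l ∈ (rχl k).index,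
              (a * actA ((rφl i).left m) a' *
                  actA ((rφl i).right m * (rψl j).left n) a'') ⊗ₜ[ℂ]
                ((rφ.right i * (rψl j).right n * (rχl k).left l) ⊗ₜ[ℂ]
                  (ractB (rψ.right j * (rχl k).right l) b * ractB (rχ.right k) b' * b'')) :=
            Finset.sum_congr rfl fun i _ => Finset.sum_congr rfl fun m _ =>
              Finset.sum_congr rfl fun j _ => Finset.sum_congr rfl fun n _ =>
              (st6_repr_coassoc rχ rχl rχr
                ((TensorProduct.mk ℂ A (H ⊗[ℂ] B)
                    (a * actA ((rφl i).left m) a' *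
                      actA ((rφl i).right m * (rψl j).left n) a'')) ∘ₗ
                  TensorProduct.map
                    (LinearMap.mulLeft ℂ (rφ.right i * (rψl j).right n))
                    (LinearMap.mulRight ℂ b'' ∘ₗ LinearMap.mul' ℂ B ∘ₗ
                      TensorProduct.map (ractB.flip b ∘ₗ LinearMap.mulLeft ℂ (rψ.right j))
                        (ractB.flip b')))
                (fun z₁ z₂ z₃ =>
                  (a * actA ((rφl i).left m) a' *
                      actA ((rφl i).right m * (rψl j).left n) a'') ⊗ₜ[ℂ]
                    ((rφ.right i * (rψl j).right n * z₁) ⊗ₜ[ℂ]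
                      (ractB (rψ.right j * z₂) b * ractB z₃ b' * b'')))
                (fun z₁ z₂ z₃ => by
                  simp only [LinearMap.coe_comp, Function.comp_apply, map_tmul,
                    LinearMap.mul'_apply, LinearMap.mulLeft_apply, LinearMap.mulRight_apply,
                    LinearMap.flip_apply, mk_apply])).symm
    have rhs_eq : mul (a ⊗ₜ[ℂ] (φ ⊗ₜ[ℂ] b)) (mul (a' ⊗ₜ[ℂ] (ψ ⊗ₜ[ℂ] b')) (a'' ⊗ₜ[ℂ] (χ ⊗ₜ[ℂ] b'')))
        = ∑ i ∈ rφ.index, ∑ m ∈ (rφl i).index, ∑ j ∈ rψ.index, ∑ n ∈ (rψl j).index,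
            ∑ k ∈ rχ.index, ∑ l ∈ (rχl k).index,
            (a * actA ((rφl i).left m) a' * actA ((rφl i).right m * (rψl j).left n) a'') ⊗ₜ[ℂ]
              ((rφ.right i * (rψl j).right n * (rχl k).left l) ⊗ₜ[ℂ]
                (ractB (rψ.right j * (rχl k).right l) b * ractB (rχ.right k) b' * b'')) := by
      calc mul (a ⊗ₜ[ℂ] (φ ⊗ₜ[ℂ] b)) (mul (a' ⊗ₜ[ℂ] (ψ ⊗ₜ[ℂ] b')) (a'' ⊗ₜ[ℂ] (χ ⊗ₜ[ℂ] b'')))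
          = ∑ j ∈ rψ.index, ∑ k ∈ rχ.index,
              mul (a ⊗ₜ[ℂ] (φ ⊗ₜ[ℂ] b))
                ((a' * actA (rψ.left j) a'') ⊗ₜ[ℂ]
                  ((rψ.right j * rχ.left k) ⊗ₜ[ℂ] (ractB (rχ.right k) b' * b''))) := by
            rw [st6_mul_rep actA ractB mul hmul a' a'' b' b'' ψ χ rψ rχ]
            simp only [map_sum]
        _ = ∑ j ∈ rψ.index, ∑ k ∈ rχ.index, ∑ i ∈ rφ.index, ∑ m ∈ (rN j k).index,
              (a * actA (rφ.left i) (a' * actA (rψ.left j) a'')) ⊗ₜ[ℂ]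
                ((rφ.right i * (rN j k).left m) ⊗ₜ[ℂ]
                  (ractB ((rN j k).right m) b * (ractB (rχ.right k) b' * b''))) :=
            Finset.sum_congr rfl fun j _ => Finset.sum_congr rfl fun k _ =>
              st6_mul_rep actA ractB mul hmul _ _ _ _ _ _ rφ (rN j k)
        _ = ∑ j ∈ rψ.index, ∑ k ∈ rχ.index, ∑ i ∈ rφ.index,
              ∑ n ∈ (rψr j).index, ∑ l ∈ (rχl k).index,
              (a * actA (rφ.left i) (a' * actA (rψ.left j) a'')) ⊗ₜ[ℂ]
                ((rφ.right i * ((rψr j).left n * (rχl k).left l)) ⊗ₜ[ℂ]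
                  (ractB ((rψr j).right n * (rχl k).right l) b *
                    (ractB (rχ.right k) b' * b''))) :=
            Finset.sum_congr rfl fun j _ => Finset.sum_congr rfl fun k _ =>
              Finset.sum_congr rfl fun i _ =>
              st6_repr_mul (rN j k) (rψr j) (rχl k)
                ((TensorProduct.mk ℂ A (H ⊗[ℂ] B)
                    (a * actA (rφ.left i) (a' * actA (rψ.left j) a''))) ∘ₗ
                  TensorProduct.map (LinearMap.mulLeft ℂ (rφ.right i))
                    (LinearMap.mulRight ℂ (ractB (rχ.right k) b' * b'') ∘ₗ ractB.flip b))
                (fun u v => (a * actA (rφ.left i) (a' * actA (rψ.left j) a'')) ⊗ₜ[ℂ]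
                  ((rφ.right i * u) ⊗ₜ[ℂ] (ractB v b * (ractB (rχ.right k) b' * b''))))
                (fun u v => rfl)
        _ = ∑ j ∈ rψ.index, ∑ k ∈ rχ.index, ∑ i ∈ rφ.index,
              ∑ n ∈ (rψr j).index, ∑ l ∈ (rχl k).index, ∑ p ∈ (rφl i).index,
              (a * (actA ((rφl i).left p) a' *
                  actA ((rφl i).right p * rψ.left j) a'')) ⊗ₜ[ℂ]
                ((rφ.right i * ((rψr j).left n * (rχl k).left l)) ⊗ₜ[ℂ]
                  (ractB ((rψr j).right n * (rχl k).right l) b *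
                    (ractB (rχ.right k) b' * b''))) := by
            simp only [hA, Finset.mul_sum, sum_tmul]
        _ = ∑ j ∈ rψ.index, ∑ k ∈ rχ.index, ∑ n ∈ (rψr j).index, ∑ i ∈ rφ.index,
              ∑ l ∈ (rχl k).index, ∑ p ∈ (rφl i).index,
              (a * (actA ((rφl i).left p) a' *
                  actA ((rφl i).right p * rψ.left j) a'')) ⊗ₜ[ℂ]
                ((rφ.right i * ((rψr j).left n * (rχl k).left l)) ⊗ₜ[ℂ]
                  (ractB ((rψr j).right n * (rχl k).right l) b *
                    (ractB (rχ.right k) b' * b''))) :=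
            Finset.sum_congr rfl fun j _ => Finset.sum_congr rfl fun k _ => Finset.sum_comm
        _ = ∑ j ∈ rψ.index, ∑ n ∈ (rψr j).index, ∑ k ∈ rχ.index, ∑ i ∈ rφ.index,
              ∑ l ∈ (rχl k).index, ∑ p ∈ (rφl i).index,
              (a * (actA ((rφl i).left p) a' *
                  actA ((rφl i).right p * rψ.left j) a'')) ⊗ₜ[ℂ]
                ((rφ.right i * ((rψr j).left n * (rχl k).left l)) ⊗ₜ[ℂ]
                  (ractB ((rψr j).right n * (rχl k).right l) b *
                    (ractB (rχ.right k) b' * b''))) :=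
            Finset.sum_congr rfl fun j _ => Finset.sum_comm
        _ = ∑ j ∈ rψ.index, ∑ n ∈ (rψl j).index, ∑ k ∈ rχ.index, ∑ i ∈ rφ.index,
              ∑ l ∈ (rχl k).index, ∑ p ∈ (rφl i).index,
              (a * (actA ((rφl i).left p) a' *
                  actA ((rφl i).right p * (rψl j).left n) a'')) ⊗ₜ[ℂ]
                ((rφ.right i * ((rψl j).right n * (rχl k).left l)) ⊗ₜ[ℂ]
                  (ractB (rψ.right j * (rχl k).right l) b *
                    (ractB (rχ.right k) b' * b''))) :=
            (st6_repr_coassoc rψ rψl rψr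
              (∑ k ∈ rχ.index, ∑ i ∈ rφ.index, ∑ l ∈ (rχl k).index, ∑ p ∈ (rφl i).index,
                TensorProduct.map
                  (LinearMap.mulLeft ℂ a ∘ₗ
                    LinearMap.mulLeft ℂ (actA ((rφl i).left p) a') ∘ₗ
                    actA.flip a'' ∘ₗ LinearMap.mulLeft ℂ ((rφl i).right p))
                  (TensorProduct.map
                    (LinearMap.mulLeft ℂ (rφ.right i) ∘ₗ
                      LinearMap.mulRight ℂ ((rχl k).left l))
                    (LinearMap.mulRight ℂ (ractB (rχ.right k) b' * b'') ∘ₗ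
                      ractB.flip b ∘ₗ LinearMap.mulRight ℂ ((rχl k).right l))))
              (fun y₁ y₂ y₃ => ∑ k ∈ rχ.index, ∑ i ∈ rφ.index,
                ∑ l ∈ (rχl k).index, ∑ p ∈ (rφl i).index,
                (a * (actA ((rφl i).left p) a' *
                    actA ((rφl i).right p * y₁) a'')) ⊗ₜ[ℂ]
                  ((rφ.right i * (y₂ * (rχl k).left l)) ⊗ₜ[ℂ]
                    (ractB (y₃ * (rχl k).right l) b *
                      (ractB (rχ.right k) b' * b''))))
              (fun y₁ y₂ y₃ => by
                simp only [LinearMap.sum_apply, LinearMap.coe_comp, Function.comp_apply,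
                  map_tmul, LinearMap.mulLeft_apply, LinearMap.mulRight_apply,
                  LinearMap.flip_apply])).symm
        _ = ∑ i ∈ rφ.index, ∑ p ∈ (rφl i).index, ∑ j ∈ rψ.index, ∑ n ∈ (rψl j).index,
              ∑ k ∈ rχ.index, ∑ l ∈ (rχl k).index,
              (a * (actA ((rφl i).left p) a' *
                  actA ((rφl i).right p * (rψl j).left n) a'')) ⊗ₜ[ℂ]
                ((rφ.right i * ((rψl j).right n * (rχl k).left l)) ⊗ₜ[ℂ]
                  (ractB (rψ.right j * (rχl k).right l) b *
                    (ractB (rχ.right k) b' * b''))) :=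
            st6_sum_shuffle rφ.index (fun i => (rφl i).index) rψ.index
              (fun j => (rψl j).index) rχ.index (fun k => (rχl k).index) _
        _ = ∑ i ∈ rφ.index, ∑ m ∈ (rφl i).index, ∑ j ∈ rψ.index, ∑ n ∈ (rψl j).index,
              ∑ k ∈ rχ.index, ∑ l ∈ (rχl k).index,
              (a * actA ((rφl i).left m) a' *
                  actA ((rφl i).right m * (rψl j).left n) a'') ⊗ₜ[ℂ]
                ((rφ.right i * (rψl j).right n * (rχl k).left l) ⊗ₜ[ℂ]
                  (ractB (rψ.right j * (rχl k).right l) b * ractB (rχ.right k) b' * b'')) :=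
            Finset.sum_congr rfl fun i _ => Finset.sum_congr rfl fun m _ =>
              Finset.sum_congr rfl fun j _ => Finset.sum_congr rfl fun n _ =>
              Finset.sum_congr rfl fun k _ => Finset.sum_congr rfl fun l _ => by
                simp only [mul_assoc]
    rw [lhs_eq, rhs_eq]
  have hone_left : ∀ (a' : A) (b' : B) (ψ : H),
      mul ((1 : A) ⊗ₜ[ℂ] ((1 : H) ⊗ₜ[ℂ] (1 : B))) (a' ⊗ₜ[ℂ] (ψ ⊗ₜ[ℂ] b'))
        = a' ⊗ₜ[ℂ] (ψ ⊗ₜ[ℂ] b') := by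
    intro a' b' ψ
    set rψ := Coalgebra.Repr.arbitrary ℂ ψ with hrψ
    rw [st6_mul_rep actA ractB mul hmul _ _ _ _ _ _ (st6_reprOne H) rψ]
    have hterm : ∀ j ∈ rψ.index, ∀ i ∈ (st6_reprOne H).index,
        ((1 : A) * actA ((st6_reprOne H).left i) a') ⊗ₜ[ℂ]
            (((st6_reprOne H).right i * rψ.left j) ⊗ₜ[ℂ] (ractB (rψ.right j) (1 : B) * b'))
          = Coalgebra.counit (R := ℂ) (rψ.right j) • (a' ⊗ₜ[ℂ] (rψ.left j ⊗ₜ[ℂ] b')) := by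
      intro j _ i _
      simp [st6_reprOne, hactA_one, hractB_unit, smul_mul_assoc, tmul_smul]
    rw [show (st6_reprOne H).index = {()} from rfl]
    simp only [Finset.sum_singleton]
    rw [Finset.sum_congr rfl fun j hj => hterm j hj () (Finset.mem_singleton_self ())]
    exact st6_repr_counit_right rψ
      ((TensorProduct.mk ℂ A (H ⊗[ℂ] B) a') ∘ₗ (TensorProduct.mk ℂ H B).flip b')
      (fun h => a' ⊗ₜ[ℂ] (h ⊗ₜ[ℂ] b')) (fun x => rfl)
  have hone_right : ∀ (a : A) (b : B) (φ : H),
      mul (a ⊗ₜ[ℂ] (φ ⊗ₜ[ℂ] b)) ((1 : A) ⊗ₜ[ℂ] ((1 : H) ⊗ₜ[ℂ] (1 : B)))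
        = a ⊗ₜ[ℂ] (φ ⊗ₜ[ℂ] b) := by
    intro a b φ
    set rφ := Coalgebra.Repr.arbitrary ℂ φ with hrφ
    rw [st6_mul_rep actA ractB mul hmul _ _ _ _ _ _ rφ (st6_reprOne H)]
    have hterm : ∀ i ∈ rφ.index, ∀ j ∈ (st6_reprOne H).index,
        (a * actA (rφ.left i) (1 : A)) ⊗ₜ[ℂ]
            ((rφ.right i * (st6_reprOne H).left j) ⊗ₜ[ℂ]
              (ractB ((st6_reprOne H).right j) b * (1 : B)))
          = Coalgebra.counit (R := ℂ) (rφ.left i) • (a ⊗ₜ[ℂ] (rφ.right i ⊗ₜ[ℂ] b)) := by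
      intro i _ j _
      simp [st6_reprOne, hactA_unit, hractB_one, mul_smul_comm, smul_tmul']
    rw [show (st6_reprOne H).index = {()} from rfl]
    simp only [Finset.sum_singleton]
    rw [Finset.sum_congr rfl fun i hi => hterm i hi () (Finset.mem_singleton_self ())]
    exact st6_repr_counit_left rφ
      ((TensorProduct.mk ℂ A (H ⊗[ℂ] B) a) ∘ₗ (TensorProduct.mk ℂ H B).flip b)
      (fun h => a ⊗ₜ[ℂ] (h ⊗ₜ[ℂ] b)) (fun x => rfl)
  -- now reduce the general statements to pure tensors
  refine ⟨?_, ?_, ?_⟩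
  · intro x y z
    induction x using TensorProduct.induction_on with
    | zero => simp
    | add u v hu hv => simp [map_add, LinearMap.add_apply, hu, hv]
    | tmul a s =>
      induction s using TensorProduct.induction_on with
      | zero => simp
      | add u v hu hv => simp only [tmul_add, map_add, LinearMap.add_apply] at hu hv ⊢; rw [hu, hv]
      | tmul φ b =>
        induction y using TensorProduct.induction_on with
        | zero => simp
        | add u v hu hv => simp [map_add, LinearMap.add_apply, hu, hv]
        | tmul a' s' =>
          induction s' using TensorProduct.induction_on with
          | zero => simp
          | add u v hu hv =>
            simp only [tmul_add, map_add, LinearMap.add_apply] at hu hv ⊢; rw [hu, hv]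
          | tmul ψ b' =>
            induction z using TensorProduct.induction_on with
            | zero => simp
            | add u v hu hv => simp [map_add, LinearMap.add_apply, hu, hv]
            | tmul a'' s'' =>
              induction s'' using TensorProduct.induction_on with
              | zero => simp
              | add u v hu hv =>
                simp only [tmul_add, map_add, LinearMap.add_apply] at hu hv ⊢; rw [hu, hv]
              | tmul χ b'' => exact hassoc a a' a'' b b' b'' φ ψ χ
  · intro x
    induction x using TensorProduct.induction_on with
    | zero => simp
    | add u v hu hv => simp [map_add, hu, hv]
    | tmul a s =>
      induction s using TensorProduct.induction_on with
      | zero => simp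
      | add u v hu hv => simp only [tmul_add, map_add] at hu hv ⊢; rw [hu, hv]
      | tmul φ b => exact hone_left a b φ
  · intro x
    induction x using TensorProduct.induction_on with
    | zero => simp
    | add u v hu hv => simp [map_add, LinearMap.add_apply, hu, hv]
    | tmul a s =>
      induction s using TensorProduct.induction_on with
      | zero => simp
      | add u v hu hv =>
        simp only [tmul_add, map_add, LinearMap.add_apply] at hu hv ⊢; rw [hu, hv]
      | tmul φ b => exact hone_right a b φ
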